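/- Let f = (f₁, f₂) ∈ ℝ² with f₁ ≥ 0, f₂ ≥ 0, f₁ + f₂ ≤ 1, and f₁ < 1, f₂ < 1. Then the linear program: minimize s₁ + s₂ + s₃ subject to s₁ + ((2−f₁)/(1−f₁))s₂ + s₃ ≥ 1, s₁ + s₂ + ((2−f₂)/(1−f₂))s₃ ≥ 1, s ≥ 0, has optimal value 1 − 1/(3 − f₁ − f₂), attained at s₁ = 0, s₂ = (1−f₁)/(3−f₁−f₂), s₃ = (1−f₂)/(3−f₁−f₂). -/

import Mathlib

/-- For `f` in the corner triangle `f₁, f₂ ≥ 0`, `f₁+f₂ ≤ 1`, the two-split LP has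
optimal value `1 - 1/(3-f₁-f₂)`, attained at the stated point. -/
theorem stmt_8 (f₁ f₂ : ℝ) (hf1 : 0 ≤ f₁) (hf2 : 0 ≤ f₂) (hsum : f₁ + f₂ ≤ 1)
    (hf1' : f₁ < 1) (hf2' : f₂ < 1) :
    IsLeast {v : ℝ | ∃ s₁ s₂ s₃ : ℝ, 0 ≤ s₁ ∧ 0 ≤ s₂ ∧ 0 ≤ s₃ ∧
        1 ≤ s₁ + ((2 - f₁) / (1 - f₁)) * s₂ + s₃ ∧
        1 ≤ s₁ + s₂ + ((2 - f₂) / (1 - f₂)) * s₃ ∧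
        v = s₁ + s₂ + s₃} (1 - 1 / (3 - f₁ - f₂)) ∧
    (0 ≤ (1 - f₁) / (3 - f₁ - f₂) ∧ 0 ≤ (1 - f₂) / (3 - f₁ - f₂) ∧
      1 ≤ 0 + ((2 - f₁) / (1 - f₁)) * ((1 - f₁) / (3 - f₁ - f₂)) + (1 - f₂) / (3 - f₁ - f₂) ∧
      1 ≤ 0 + (1 - f₁) / (3 - f₁ - f₂) + ((2 - f₂) / (1 - f₂)) * ((1 - f₂) / (3 - f₁ - f₂)) ∧
      1 - 1 / (3 - f₁ - f₂) = 0 + (1 - f₁) / (3 - f₁ - f₂) + (1 - f₂) / (3 - f₁ - f₂)) := by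
  have ha : (0:ℝ) < 1 - f₁ := by linarith
  have hb : (0:ℝ) < 1 - f₂ := by linarith
  have hD : (0:ℝ) < 3 - f₁ - f₂ := by linarith
  have hne1 : (1:ℝ) - f₁ ≠ 0 := ne_of_gt ha
  have hne2 : (1:ℝ) - f₂ ≠ 0 := ne_of_gt hb
  have hDne : (3:ℝ) - f₁ - f₂ ≠ 0 := ne_of_gt hD
  have feas : 0 ≤ (1 - f₁) / (3 - f₁ - f₂) ∧ 0 ≤ (1 - f₂) / (3 - f₁ - f₂) ∧
      1 ≤ 0 + ((2 - f₁) / (1 - f₁)) * ((1 - f₁) / (3 - f₁ - f₂)) + (1 - f₂) / (3 - f₁ - f₂) ∧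
      1 ≤ 0 + (1 - f₁) / (3 - f₁ - f₂) + ((2 - f₂) / (1 - f₂)) * ((1 - f₂) / (3 - f₁ - f₂)) ∧
      1 - 1 / (3 - f₁ - f₂) = 0 + (1 - f₁) / (3 - f₁ - f₂) + (1 - f₂) / (3 - f₁ - f₂) := by
    refine ⟨by positivity, by positivity, ?_, ?_, ?_⟩
    · rw [div_mul_div_comm]
      rw [show (2 - f₁) * (1 - f₁) = (1 - f₁) * (2 - f₁) by ring]
      rw [mul_div_mul_left _ _ hne1]
      rw [zero_add, ← add_div, le_div_iff₀ hD]
      linarith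
    · rw [div_mul_div_comm]
      rw [show (2 - f₂) * (1 - f₂) = (1 - f₂) * (2 - f₂) by ring]
      rw [mul_div_mul_left _ _ hne2]
      rw [zero_add, ← add_div, le_div_iff₀ hD]
      linarith
    · field_simp
      ring
  refine ⟨⟨⟨0, (1 - f₁) / (3 - f₁ - f₂), (1 - f₂) / (3 - f₁ - f₂),
      le_refl 0, feas.1, feas.2.1, feas.2.2.1, feas.2.2.2.1, feas.2.2.2.2⟩, ?_⟩, feas⟩
  rintro v ⟨s₁, s₂, s₃, hs1, hs2, hs3, h1, h2, rfl⟩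
  have h1' : 1 - f₁ ≤ (1 - f₁) * s₁ + (2 - f₁) * s₂ + (1 - f₁) * s₃ := by
    have := mul_le_mul_of_nonneg_left h1 ha.le
    calc 1 - f₁ = (1 - f₁) * 1 := by ring
    _ ≤ (1 - f₁) * (s₁ + ((2 - f₁) / (1 - f₁)) * s₂ + s₃) := this
    _ = (1 - f₁) * s₁ + (1 - f₁) * ((2 - f₁) / (1 - f₁)) * s₂ + (1 - f₁) * s₃ := by ring
    _ = (1 - f₁) * s₁ + (2 - f₁) * s₂ + (1 - f₁) * s₃ := by
        rw [mul_div_cancel₀ _ hne1]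
  have h2' : 1 - f₂ ≤ (1 - f₂) * s₁ + (1 - f₂) * s₂ + (2 - f₂) * s₃ := by
    have := mul_le_mul_of_nonneg_left h2 hb.le
    calc 1 - f₂ = (1 - f₂) * 1 := by ring
    _ ≤ (1 - f₂) * (s₁ + s₂ + ((2 - f₂) / (1 - f₂)) * s₃) := this
    _ = (1 - f₂) * s₁ + (1 - f₂) * s₂ + (1 - f₂) * ((2 - f₂) / (1 - f₂)) * s₃ := by ring
    _ = (1 - f₂) * s₁ + (1 - f₂) * s₂ + (2 - f₂) * s₃ := by
        rw [mul_div_cancel₀ _ hne2]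
  rw [sub_le_iff_le_add, ← sub_le_iff_le_add', le_div_iff₀ hD]
  nlinarith [mul_nonneg (mul_nonneg ha.le hb.le) hs1, mul_nonneg hD.le hs1]
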